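/- For the wheel graph W_n (n ≥ 5), consisting of a cycle on n-1 vertices each joined to a central vertex v₀, the empty set is the unique minimizer of |S| + n - c(S) over subsets S ⊆ V(W_n): for every nonempty S, |S| + n - c(S) > n - 1. -/

import Mathlib

noncomputable def numComp {V : Type} (G : SimpleGraph V) (S : Finset V) : ℕ :=
  Nat.card ((G.induce ((S : Set V))ᶜ).ConnectedComponent)

/-- The wheel graph on `m + 2` vertices: a central vertex `none` joined to every
vertex of a cycle on `m + 1` vertices. -/
def wheelGraph (m : ℕ) : SimpleGraph (Option (Fin (m + 1))) :=
  SimpleGraph.fromRel (fun a b =>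
    a = none ∨ ∃ i j, a = some i ∧ b = some j ∧ (SimpleGraph.cycleGraph (m + 1)).Adj i j)

open SimpleGraph
open Fin.CommRing

lemma wheel_adj_hub (m : ℕ) (i : Fin (m+1)) : (wheelGraph m).Adj none (some i) := by
  simp [wheelGraph, fromRel_adj]

lemma wheel_adj_some {m : ℕ} {i j : Fin (m+1)} :
    (wheelGraph m).Adj (some i) (some j) ↔ (cycleGraph (m+1)).Adj i j := by
  constructor
  · rintro ⟨hne, (h | h) | (h | h)⟩
    · exact absurd h (by simp)
    · obtain ⟨a, b, ha, hb, hadj⟩ := h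
      cases ha; cases hb; exact hadj
    · exact absurd h (by simp)
    · obtain ⟨a, b, ha, hb, hadj⟩ := h
      cases ha; cases hb; exact hadj.symm
  · intro h
    exact ⟨by simpa using h.ne, Or.inl (Or.inr ⟨i, j, rfl, rfl, h⟩)⟩

lemma cycle_adj_succ (k : ℕ) (i : Fin (k+4)) : (cycleGraph (k+4)).Adj i (i+1) := by
  have : (cycleGraph ((k+2)+2)).Adj i (i+1) := by
    rw [cycleGraph_adj]; right; simp
  exact this

lemma cycle_adj_iff {k : ℕ} {i j : Fin (k+4)} :
    (cycleGraph (k+4)).Adj i j ↔ j = i + 1 ∨ i = j + 1 := by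
  have h : (cycleGraph ((k+2)+2)).Adj i j ↔ i - j = 1 ∨ j - i = 1 := cycleGraph_adj
  rw [h]
  constructor
  · rintro (h | h)
    · right; rw [← h]; ring
    · left; rw [← h]; ring
  · rintro (h | h)
    · right; rw [h]; ring
    · left; rw [h]; ring

lemma wheel_adj_some' {k : ℕ} {i j : Fin (k+4)} :
    (wheelGraph (k+3)).Adj (some i) (some j) ↔ j = i + 1 ∨ i = j + 1 := by
  have h1 : (wheelGraph (k+3)).Adj (some i) (some j) ↔ (cycleGraph (k+4)).Adj i j :=
    wheel_adj_some
  exact h1.trans cycle_adj_iff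

lemma comp_card_le_one {V : Type*} {G : SimpleGraph V} (h : G.Preconnected) :
    Nat.card G.ConnectedComponent ≤ 1 := by
  have hs : Subsingleton G.ConnectedComponent :=
    ⟨ConnectedComponent.ind₂ (fun v w => ConnectedComponent.sound (h v w))⟩
  simpa using Nat.card_le_card_of_injective (fun _ : G.ConnectedComponent => ())
    (fun a b _ => Subsingleton.elim a b)

/-- adjacency-invariant functions are path-invariant -/
lemma lift_wd {V : Type*} {G : SimpleGraph V} {β : Sort*} (f : V → β)
    (h : ∀ v w, G.Adj v w → f v = f w) :
    ∀ (v w : V) (p : G.Walk v w), p.IsPath → f v = f w := by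
  have key : ∀ (v w : V) (p : G.Walk v w), f v = f w := by
    intro v w p
    induction p with
    | nil => rfl
    | cons hadj _ ih => exact (h _ _ hadj).trans ih
  exact fun v w p _ => key v w p

section Main

variable {k : ℕ} {S : Finset (Option (Fin (k+4)))}

/-- The arc `a, a+1, ..., a+t` avoiding `S` is connected in the induced graph. -/
lemma reach_arc (a : Fin (k+4)) (t : ℕ)
    (hA : ∀ j : ℕ, j ≤ t → some (a + (j : Fin (k+4))) ∉ S) :
    ((wheelGraph (k+3)).induce ((S : Set (Option (Fin (k+4))))ᶜ)).Reachable
      ⟨some a, by simpa using hA 0 (Nat.zero_le _)⟩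
      ⟨some (a + (t : Fin (k+4))), by simpa using hA t le_rfl⟩ := by
  induction t with
  | zero =>
    have : (⟨some a, by simpa using hA 0 (Nat.zero_le _)⟩ :
        {x : Option (Fin (k+4)) // x ∈ ((S : Set (Option (Fin (k+4))))ᶜ)}) =
        ⟨some (a + ((0:ℕ) : Fin (k+4))), by simpa using hA 0 le_rfl⟩ := by
      apply Subtype.ext; simp
    rw [← this]
  | succ t ih =>
    have hA' : ∀ j : ℕ, j ≤ t → some (a + (j : Fin (k+4))) ∉ S :=
      fun j hj => hA j (by omega)
    refine (ih hA').trans (Adj.reachable ?_)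
    show (wheelGraph (k+3)).Adj (some (a + (t : Fin (k+4)))) (some (a + ((t+1 : ℕ) : Fin (k+4))))
    rw [wheel_adj_some]
    have : a + ((t+1 : ℕ) : Fin (k+4)) = (a + (t : Fin (k+4))) + 1 := by
      push_cast; ring
    rw [this]
    exact cycle_adj_succ k _

lemma main_bound (hS : S.Nonempty) :
    Nat.card (((wheelGraph (k+3)).induce ((S : Set (Option (Fin (k+4))))ᶜ)).ConnectedComponent)
      ≤ S.card := by
  classical
  set H := (wheelGraph (k+3)).induce ((S : Set (Option (Fin (k+4))))ᶜ) with hH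
  by_cases hnone : none ∈ S
  · by_cases hsome : ∃ i₀ : Fin (k+4), some i₀ ∈ S
    · -- main case: injection from components into S
      obtain ⟨i₀, hi₀⟩ := hsome
      have exK : ∀ a : Fin (k+4), ∃ t : ℕ, 0 < t ∧ some (a + (t : Fin (k+4))) ∈ S := by
        intro a
        by_cases ha : a = i₀
        · refine ⟨k+4, by omega, ?_⟩
          subst ha
          have h0 : ((k+4 : ℕ) : Fin (k+4)) = 0 := by
            simp
          rw [h0, add_zero]; exact hi₀
        · refine ⟨(i₀ - a).val, ?_, ?_⟩
          · have hne : i₀ - a ≠ 0 := sub_ne_zero_of_ne (Ne.symm ha)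
            exact Nat.pos_of_ne_zero fun h => hne (Fin.ext (by rw [h]; simp))
          · have he : a + ((((i₀ - a).val : ℕ)) : Fin (k+4)) = i₀ := by
              rw [Fin.cast_val_eq_self]; ring
            rw [he]; exact hi₀
      set K : Fin (k+4) → ℕ := fun a => Nat.find (exK a) with hK
      have hKpos : ∀ a, 0 < K a := fun a => (Nat.find_spec (exK a)).1
      have hKmem : ∀ a, some (a + (K a : Fin (k+4))) ∈ S := fun a => (Nat.find_spec (exK a)).2
      have hKmin : ∀ a t, 0 < t → t < K a → some (a + (t : Fin (k+4))) ∉ S := by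
        intro a t ht hlt hmem
        exact Nat.find_min (exK a) hlt ⟨ht, hmem⟩
      -- the vertex labelling
      set φ : {x : Option (Fin (k+4)) // x ∈ ((S : Set (Option (Fin (k+4))))ᶜ)} → Fin (k+4) :=
        fun v => Option.elim v.1 (0 : Fin (k+4)) (fun a => a + (K a : Fin (k+4))) with hφ
      have hstep : ∀ a : Fin (k+4), some a ∉ S → some (a+1) ∉ S →
          a + (K a : Fin (k+4)) = (a+1) + (K (a+1) : Fin (k+4)) := by
        intro a ha ha1
        have h2 : 2 ≤ K a := by
          by_contra h
          push_neg at h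
          have h1 : K a = 1 := by have := hKpos a; omega
          have := hKmem a
          rw [h1] at this
          simp only [Nat.cast_one] at this
          exact ha1 this
        have e1 : (a+1) + ((K a - 1 : ℕ) : Fin (k+4)) = a + (K a : Fin (k+4)) := by
          have hc : ((K a : ℕ) : Fin (k+4)) = ((1:ℕ) : Fin (k+4)) + ((K a - 1 : ℕ) : Fin (k+4)) := by
            rw [← Nat.cast_add]; congr 1; omega
          rw [hc]; push_cast; ring
        have hle : K (a+1) ≤ K a - 1 := by
          apply Nat.find_min'
          exact ⟨by omega, by rw [e1]; exact hKmem a⟩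
        have hge : K a ≤ K (a+1) + 1 := by
          apply Nat.find_min'
          refine ⟨by omega, ?_⟩
          have he : a + ((K (a+1) + 1 : ℕ) : Fin (k+4)) = (a+1) + ((K (a+1) : ℕ) : Fin (k+4)) := by
            push_cast; ring
          rw [he]; exact hKmem (a+1)
        have hKeq : K (a+1) = K a - 1 := by omega
        calc a + (K a : Fin (k+4)) = (a+1) + ((K a - 1 : ℕ) : Fin (k+4)) := e1.symm
          _ = (a+1) + (K (a+1) : Fin (k+4)) := by rw [hKeq]
      have hφadj : ∀ v w, H.Adj v w → φ v = φ w := by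
        rintro ⟨x, hx⟩ ⟨y, hy⟩ hadj
        have hx' : x ∉ S := by simpa using hx
        have hy' : y ∉ S := by simpa using hy
        cases x with
        | none => exact absurd hnone hx'
        | some a =>
        cases y with
        | none => exact absurd hnone hy'
        | some b =>
          have hadj' : (wheelGraph (k+3)).Adj (some a) (some b) := hadj
          rw [wheel_adj_some'] at hadj'
          show a + (K a : Fin (k+4)) = b + (K b : Fin (k+4))
          rcases hadj' with h | h
          · subst h; exact hstep a hx' hy'
          · subst h; exact (hstep b hy' hx').symm
      set f : H.ConnectedComponent → Fin (k+4) :=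
        ConnectedComponent.lift φ (lift_wd φ hφadj) with hf
      have hnotmem_arc : ∀ (a : Fin (k+4)), some a ∉ S →
          ∀ j : ℕ, j ≤ K a - 1 → some (a + (j : Fin (k+4))) ∉ S := by
        intro a ha j hj
        rcases Nat.eq_zero_or_pos j with rfl | hpos
        · simpa using ha
        · exact hKmin a j hpos (by have := hKpos a; omega)
      have hend : ∀ (a : Fin (k+4)) (ha : some a ∉ S),
          H.connectedComponentMk ⟨some a, by simpa using ha⟩ =
          H.connectedComponentMk ⟨some (a + ((K a - 1 : ℕ) : Fin (k+4))),
            by simpa using hnotmem_arc a ha (K a - 1) le_rfl⟩ := by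
        intro a ha
        exact ConnectedComponent.sound (reach_arc a (K a - 1) (hnotmem_arc a ha))
      have hinj : Function.Injective f := by
        intro C D
        refine ConnectedComponent.ind₂ (β := fun C D => f C = f D → C = D) ?_ C D
        rintro ⟨x, hx⟩ ⟨y, hy⟩ h
        have hx' : x ∉ S := by simpa using hx
        have hy' : y ∉ S := by simpa using hy
        cases x with
        | none => exact absurd hnone hx'
        | some a =>
        cases y with
        | none => exact absurd hnone hy'
        | some b =>
          have h' : a + (K a : Fin (k+4)) = b + (K b : Fin (k+4)) := h
          have hc1 : ((K a - 1 : ℕ) : Fin (k+4)) = ((K a : ℕ) : Fin (k+4)) - 1 := by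
            rw [Nat.cast_sub (hKpos a)]; simp
          have hc2 : ((K b - 1 : ℕ) : Fin (k+4)) = ((K b : ℕ) : Fin (k+4)) - 1 := by
            rw [Nat.cast_sub (hKpos b)]; simp
          have key : a + ((K a - 1 : ℕ) : Fin (k+4)) = b + ((K b - 1 : ℕ) : Fin (k+4)) := by
            rw [hc1, hc2, show a + (((K a : ℕ) : Fin (k+4)) - 1) = (a + ((K a : ℕ) : Fin (k+4))) - 1 by ring,
              show b + (((K b : ℕ) : Fin (k+4)) - 1) = (b + ((K b : ℕ) : Fin (k+4))) - 1 by ring, h']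
          rw [hend a hx', hend b hy']
          exact congrArg _ (Subtype.ext (congrArg some key))
      have hmem : ∀ C : H.ConnectedComponent, some (f C) ∈ S := by
        refine ConnectedComponent.ind ?_
        rintro ⟨x, hx⟩
        have hx' : x ∉ S := by simpa using hx
        cases x with
        | none => exact absurd hnone hx'
        | some a =>
          show some (a + (K a : Fin (k+4))) ∈ S
          exact hKmem a
      have hcard : Nat.card H.ConnectedComponent
          ≤ Nat.card {x : Option (Fin (k+4)) // x ∈ S} := by
        refine Nat.card_le_card_of_injective (fun C => ⟨some (f C), hmem C⟩) ?_
        intro C D hCD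
        exact hinj (Option.some_injective _ (Subtype.mk_eq_mk.1 hCD))
      have hSc : Nat.card {x : Option (Fin (k+4)) // x ∈ S} = S.card := by
        rw [Nat.card_eq_fintype_card, Fintype.card_coe]
      omega
    · -- S = {none}
      push_neg at hsome
      have hSeq : ∀ x, x ∈ S ↔ x = none := by
        intro x
        constructor
        · intro hx; cases x with
          | none => rfl
          | some a => exact absurd hx (hsome a)
        · rintro rfl; exact hnone
      have hpre : H.Preconnected := by
        rintro ⟨x, hx⟩ ⟨y, hy⟩
        have hx' : x ∉ S := by simpa using hx
        have hy' : y ∉ S := by simpa using hy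
        cases x with
        | none => exact absurd hnone hx'
        | some a =>
        cases y with
        | none => exact absurd hnone hy'
        | some b =>
          have h := reach_arc (S := S) a (b - a).val
            (fun j _ => by rw [hSeq]; simp)
          have hb : a + (((b - a).val : ℕ) : Fin (k+4)) = b := by
            rw [Fin.cast_val_eq_self]; ring
          convert h using 2 <;> rw [hb]
      calc Nat.card H.ConnectedComponent ≤ 1 := comp_card_le_one hpre
        _ ≤ S.card := Finset.Nonempty.card_pos hS
  · -- hub not removed: everything connects through `none`
    have hnc : (none : Option (Fin (k+4))) ∈ ((S : Set (Option (Fin (k+4))))ᶜ) := by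
      simpa using hnone
    have hpre : H.Preconnected := by
      have key : ∀ v : {x : Option (Fin (k+4)) // x ∈ ((S : Set (Option (Fin (k+4))))ᶜ)},
          H.Reachable v ⟨none, hnc⟩ := by
        rintro ⟨x, hx⟩
        cases x with
        | none => rfl
        | some a =>
          exact Adj.reachable (by
            show (wheelGraph (k+3)).Adj (some a) none
            exact (wheel_adj_hub (k+3) a).symm)
      intro v w
      exact (key v).trans (key w).symm
    calc Nat.card H.ConnectedComponent ≤ 1 := comp_card_le_one hpre
      _ ≤ S.card := Finset.Nonempty.card_pos hS

end Main

/-- For the wheel graph `W_n` (`n = m + 2 ≥ 5`), the empty set is the unique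
minimizer of `|S| + n - c(S)`: every nonempty `S` has height `> n - 1`. -/
theorem stmt10 (m : ℕ) (hm : 3 ≤ m)
    (S : Finset (Option (Fin (m + 1)))) (hS : S.Nonempty) :
    ((m : ℤ) + 2) - 1 < (S.card : ℤ) + (m + 2) - numComp (wheelGraph m) S := by
  obtain ⟨k, rfl⟩ : ∃ k, m = k + 3 := ⟨m - 3, by omega⟩
  have h : Nat.card (((wheelGraph (k+3)).induce
      ((S : Set (Option (Fin (k+3+1))))ᶜ)).ConnectedComponent) ≤ S.card := main_bound hS
  unfold numComp
  push_cast
  omega
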